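/- The Lawrence-Krammer matrices satisfy the braid relations: for the linear maps ρ(σ_i) on the free module with basis v_{j,k} (1 ≤ j < k ≤ n) defined by the explicit formulas, one has ρ(σ_i)ρ(σ_{i+1})ρ(σ_i) = ρ(σ_{i+1})ρ(σ_i)ρ(σ_{i+1}) for 1 ≤ i ≤ n-2, and ρ(σ_i)ρ(σ_j) = ρ(σ_j)ρ(σ_i) for |i-j| ≥ 2. -/

import Mathlib

open LaurentPolynomial

/-- Index set for the Lawrence-Krammer basis: pairs `(j,k)` with `0 ≤ j < k ≤ n-1`
(0-based indexing of the punctures). -/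
def LKIdx (n : ℕ) := {p : Fin n × Fin n // p.1 < p.2}

instance (n : ℕ) : Fintype (LKIdx n) := by unfold LKIdx; infer_instance
instance (n : ℕ) : DecidableEq (LKIdx n) := by unfold LKIdx; infer_instance

/-- Kronecker delta on a pair of indices. -/
def lkDelta {R : Type*} [CommRing R] (a b x y : ℕ) : R :=
  if a = x ∧ b = y then 1 else 0

/-- The coefficient of `v_{a,b}` in `ρ(σ_i)·v_{j,k}` (0-based indices), following the
explicit formula for the Lawrence-Krammer representation:
`ρ(σ_i)v_{j,k} = v_{j,k}` if `i ∉ {j-1,j,k-1,k}`;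
`q v_{i,k} + (q²-q) v_{i,j} + (1-q) v_{j,k}` if `i = j-1`;
`v_{j+1,k}` if `i = j ≠ k-1`; `q v_{j,i} + (1-q) v_{j,k} - (q²-q)t v_{i,k}` if `i = k-1 ≠ j`;
`v_{j,k+1}` if `i = k`; `-tq² v_{j,k}` if `i = j = k-1`. -/
def lkEntry {R : Type*} [CommRing R] (q t : R) (i a b j k : ℕ) : R :=
  if i + 1 = j then
    q * lkDelta a b i k + (q ^ 2 - q) * lkDelta a b i j + (1 - q) * lkDelta a b j k
  else if i = j ∧ i + 1 = k then -(t * q ^ 2) * lkDelta a b j k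
  else if i = j then lkDelta a b (j + 1) k
  else if i + 1 = k then
    q * lkDelta a b j i + (1 - q) * lkDelta a b j k - (q ^ 2 - q) * t * lkDelta a b i k
  else if i = k then lkDelta a b j (k + 1)
  else lkDelta a b j k

/-- The matrix of `ρ(σ_i)` on the free module with basis `v_{j,k}`, `0 ≤ j < k < n`. -/
def lkMat {R : Type*} [CommRing R] (q t : R) (n : ℕ) (i : ℕ) :
    Matrix (LKIdx n) (LKIdx n) R :=
  fun p p' => lkEntry q t i p.1.1 p.1.2 p'.1.1 p'.1.2

/-- The Laurent polynomial ring `ℤ[q^{±1}, t^{±1}]`. -/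
abbrev LKRing : Type := LaurentPolynomial (LaurentPolynomial ℤ)

/-- The variable `q` in `ℤ[q^{±1}, t^{±1}]`. -/
noncomputable def qLK : LKRing := T 1

/-- The variable `t` in `ℤ[q^{±1}, t^{±1}]`. -/
noncomputable def tLK : LKRing := C (T 1)


def lkStep {R : Type*} [CommRing R] (q t : R) (i j k : ℕ) (f : ℕ → ℕ → R) : R :=
  if i + 1 = j then q * f i k + (q ^ 2 - q) * f i j + (1 - q) * f j k
  else if i = j ∧ i + 1 = k then -(t * q ^ 2) * f j k
  else if i = j then f (j + 1) k
  else if i + 1 = k then q * f j i + (1 - q) * f j k - (q ^ 2 - q) * t * f i k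
  else if i = k then f j (k + 1)
  else f j k
def lkE2 {R : Type*} [CommRing R] (q t : R) (i1 i2 a b j k : ℕ) : R :=
  lkStep q t i2 j k (fun x y => lkStep q t i1 x y (lkDelta a b))
def lkE3 {R : Type*} [CommRing R] (q t : R) (i1 i2 i3 a b j k : ℕ) : R :=
  lkStep q t i3 j k (fun x y => lkE2 q t i1 i2 a b x y)

lemma lk_sum_delta {R : Type*} [CommRing R] {n : ℕ} (f : LKIdx n → R) {x y : ℕ}
    (hxy : x < y) (hy : y < n) :
    (∑ p : LKIdx n, f p * lkDelta (p.1.1 : ℕ) (p.1.2 : ℕ) x y)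
      = f ⟨(⟨x, lt_trans hxy hy⟩, ⟨y, hy⟩), Fin.mk_lt_mk.mpr hxy⟩ := by
  have h0 : ∀ b' : LKIdx n,
      b' ≠ ⟨(⟨x, lt_trans hxy hy⟩, ⟨y, hy⟩), Fin.mk_lt_mk.mpr hxy⟩ →
      f b' * lkDelta (b'.1.1 : ℕ) (b'.1.2 : ℕ) x y = 0 := by
    rintro ⟨⟨⟨c, hc⟩, ⟨d, hd⟩⟩, hcd⟩ hne
    have hne' : ¬(c = x ∧ d = y) := by
      rintro ⟨rfl, rfl⟩
      exact hne rfl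
    simp [lkDelta, hne']
  rw [Fintype.sum_eq_single _ h0]
  simp [lkDelta]

lemma lk_mul_step {R : Type*} [CommRing R] (q t : R) {n : ℕ} {i' : ℕ} (hn : i' + 2 ≤ n)
    (M : Matrix (LKIdx n) (LKIdx n) R) (g : ℕ → ℕ → R) (p : LKIdx n)
    (hg : ∀ p' : LKIdx n, M p p' = g (p'.1.1 : ℕ) (p'.1.2 : ℕ))
    {j k : ℕ} (hjk : j < k) (hj : j < n) (hk : k < n) :
    (M * lkMat q t n i') p ⟨(⟨j, hj⟩, ⟨k, hk⟩), Fin.mk_lt_mk.mpr hjk⟩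
      = lkStep q t i' j k g := by
  have key : ∀ x y : ℕ, x < y → y < n →
      (∑ p' : LKIdx n, M p p' * lkDelta (p'.1.1 : ℕ) (p'.1.2 : ℕ) x y) = g x y := by
    intro x y hxy hyn
    rw [lk_sum_delta (fun p' => M p p') hxy hyn]
    exact hg _
  erw [Matrix.mul_apply]
  show (∑ p' : LKIdx n, M p p' * lkEntry q t i' (p'.1.1 : ℕ) (p'.1.2 : ℕ) j k)
      = lkStep q t i' j k g
  by_cases h1 : i' + 1 = j
  · have hE : ∀ c d : ℕ, lkEntry q t i' c d j k =
        q * lkDelta c d i' k + (q ^ 2 - q) * lkDelta c d i' j + (1 - q) * lkDelta c d j k := by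
      intro c d; rw [lkEntry, if_pos h1]
    simp only [lkStep]; rw [if_pos h1]
    calc (∑ p' : LKIdx n, M p p' * lkEntry q t i' (p'.1.1 : ℕ) (p'.1.2 : ℕ) j k)
        = ∑ p' : LKIdx n,
            (q * (M p p' * lkDelta (p'.1.1 : ℕ) (p'.1.2 : ℕ) i' k)
            + (q ^ 2 - q) * (M p p' * lkDelta (p'.1.1 : ℕ) (p'.1.2 : ℕ) i' j)
            + (1 - q) * (M p p' * lkDelta (p'.1.1 : ℕ) (p'.1.2 : ℕ) j k)) :=
          Finset.sum_congr rfl fun p' _ => by rw [hE]; ring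
      _ = q * g i' k + (q ^ 2 - q) * g i' j + (1 - q) * g j k := by
          rw [Finset.sum_add_distrib, Finset.sum_add_distrib,
            ← Finset.mul_sum, ← Finset.mul_sum, ← Finset.mul_sum,
            key i' k (by omega) hk, key i' j (by omega) hj, key j k hjk hk]
  · by_cases h2 : i' = j ∧ i' + 1 = k
    · have hE : ∀ c d : ℕ, lkEntry q t i' c d j k = -(t * q ^ 2) * lkDelta c d j k := by
        intro c d; rw [lkEntry, if_neg h1, if_pos h2]
      simp only [lkStep]; rw [if_neg h1, if_pos h2]
      calc (∑ p' : LKIdx n, M p p' * lkEntry q t i' (p'.1.1 : ℕ) (p'.1.2 : ℕ) j k)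
          = ∑ p' : LKIdx n,
              -(t * q ^ 2) * (M p p' * lkDelta (p'.1.1 : ℕ) (p'.1.2 : ℕ) j k) :=
            Finset.sum_congr rfl fun p' _ => by rw [hE]; ring
        _ = -(t * q ^ 2) * g j k := by rw [← Finset.mul_sum, key j k hjk hk]
    · by_cases h3 : i' = j
      · have hE : ∀ c d : ℕ, lkEntry q t i' c d j k = lkDelta c d (j + 1) k := by
          intro c d; rw [lkEntry, if_neg h1, if_neg h2, if_pos h3]
        simp only [lkStep]; rw [if_neg h1, if_neg h2, if_pos h3]
        have hj1k : j + 1 < k := by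
          rcases Nat.lt_or_ge (j + 1) k with h | h
          · exact h
          · exfalso; exact h2 ⟨h3, by omega⟩
        calc (∑ p' : LKIdx n, M p p' * lkEntry q t i' (p'.1.1 : ℕ) (p'.1.2 : ℕ) j k)
            = ∑ p' : LKIdx n, M p p' * lkDelta (p'.1.1 : ℕ) (p'.1.2 : ℕ) (j + 1) k :=
              Finset.sum_congr rfl fun p' _ => by rw [hE]
          _ = g (j + 1) k := key (j + 1) k hj1k hk
      · by_cases h4 : i' + 1 = k
        · have hE : ∀ c d : ℕ, lkEntry q t i' c d j k =
              q * lkDelta c d j i' + (1 - q) * lkDelta c d j k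
                - (q ^ 2 - q) * t * lkDelta c d i' k := by
            intro c d; rw [lkEntry, if_neg h1, if_neg h2, if_neg h3, if_pos h4]
          simp only [lkStep]; rw [if_neg h1, if_neg h2, if_neg h3, if_pos h4]
          calc (∑ p' : LKIdx n, M p p' * lkEntry q t i' (p'.1.1 : ℕ) (p'.1.2 : ℕ) j k)
              = ∑ p' : LKIdx n,
                  (q * (M p p' * lkDelta (p'.1.1 : ℕ) (p'.1.2 : ℕ) j i')
                  + (1 - q) * (M p p' * lkDelta (p'.1.1 : ℕ) (p'.1.2 : ℕ) j k)
                  - (q ^ 2 - q) * t * (M p p' * lkDelta (p'.1.1 : ℕ) (p'.1.2 : ℕ) i' k)) :=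
                Finset.sum_congr rfl fun p' _ => by rw [hE]; ring
            _ = q * g j i' + (1 - q) * g j k - (q ^ 2 - q) * t * g i' k := by
                rw [Finset.sum_sub_distrib, Finset.sum_add_distrib,
                  ← Finset.mul_sum, ← Finset.mul_sum, ← Finset.mul_sum,
                  key j i' (by omega) (by omega), key j k hjk hk, key i' k (by omega) hk]
        · by_cases h5 : i' = k
          · have hE : ∀ c d : ℕ, lkEntry q t i' c d j k = lkDelta c d j (k + 1) := by
              intro c d; rw [lkEntry, if_neg h1, if_neg h2, if_neg h3, if_neg h4, if_pos h5]
            simp only [lkStep]; rw [if_neg h1, if_neg h2, if_neg h3, if_neg h4, if_pos h5]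
            calc (∑ p' : LKIdx n, M p p' * lkEntry q t i' (p'.1.1 : ℕ) (p'.1.2 : ℕ) j k)
                = ∑ p' : LKIdx n, M p p' * lkDelta (p'.1.1 : ℕ) (p'.1.2 : ℕ) j (k + 1) :=
                  Finset.sum_congr rfl fun p' _ => by rw [hE]
              _ = g j (k + 1) := key j (k + 1) (by omega) (by omega)
          · have hE : ∀ c d : ℕ, lkEntry q t i' c d j k = lkDelta c d j k := by
              intro c d; rw [lkEntry, if_neg h1, if_neg h2, if_neg h3, if_neg h4, if_neg h5]
            simp only [lkStep]; rw [if_neg h1, if_neg h2, if_neg h3, if_neg h4, if_neg h5]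
            calc (∑ p' : LKIdx n, M p p' * lkEntry q t i' (p'.1.1 : ℕ) (p'.1.2 : ℕ) j k)
                = ∑ p' : LKIdx n, M p p' * lkDelta (p'.1.1 : ℕ) (p'.1.2 : ℕ) j k :=
                  Finset.sum_congr rfl fun p' _ => by rw [hE]
              _ = g j k := key j k hjk hk

lemma lk_two_entry {R : Type*} [CommRing R] (q t : R) {n i1 i2 : ℕ} (h2 : i2 + 2 ≤ n)
    (p : LKIdx n) {j k : ℕ} (hjk : j < k) (hj : j < n) (hk : k < n) :
    (lkMat q t n i1 * lkMat q t n i2) p ⟨(⟨j, hj⟩, ⟨k, hk⟩), Fin.mk_lt_mk.mpr hjk⟩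
      = lkE2 q t i1 i2 (p.1.1 : ℕ) (p.1.2 : ℕ) j k :=
  lk_mul_step q t h2 (lkMat q t n i1)
    (fun x y => lkStep q t i1 x y (lkDelta (p.1.1 : ℕ) (p.1.2 : ℕ))) p
    (fun _ => rfl) hjk hj hk

lemma lk_three_entry {R : Type*} [CommRing R] (q t : R) {n i1 i2 i3 : ℕ}
    (h2 : i2 + 2 ≤ n) (h3 : i3 + 2 ≤ n)
    (p : LKIdx n) {j k : ℕ} (hjk : j < k) (hj : j < n) (hk : k < n) :
    (lkMat q t n i1 * lkMat q t n i2 * lkMat q t n i3) p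
        ⟨(⟨j, hj⟩, ⟨k, hk⟩), Fin.mk_lt_mk.mpr hjk⟩
      = lkE3 q t i1 i2 i3 (p.1.1 : ℕ) (p.1.2 : ℕ) j k :=
  lk_mul_step q t h3 (lkMat q t n i1 * lkMat q t n i2)
    (fun x y => lkE2 q t i1 i2 (p.1.1 : ℕ) (p.1.2 : ℕ) x y) p
    (fun p' => by
      obtain ⟨⟨⟨c, hc⟩, ⟨d, hd⟩⟩, hcd⟩ := p'
      exact lk_two_entry q t h2 p (hcd : c < d) hc hd) hjk hj hk

set_option maxHeartbeats 10000000 in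
set_option maxRecDepth 100000 in
lemma lk_braid_entry_aux {R : Type*} [CommRing R] (q t : R) (i a b j k : ℕ) (hjk : j < k) :
    lkE3 q t i (i + 1) i a b j k = lkE3 q t (i + 1) i (i + 1) a b j k := by
  have P01 : ∀ m : ℕ, (m = m + 1) = False := fun m => eq_false (by omega)
  have P02 : ∀ m : ℕ, (m = m + 2) = False := fun m => eq_false (by omega)
  have P03 : ∀ m : ℕ, (m = m + 1 + 1) = False := fun m => eq_false (by omega)
  have P04 : ∀ m : ℕ, (m = m + 2 + 1) = False := fun m => eq_false (by omega)
  have P05 : ∀ m : ℕ, (m = m + 1 + 1 + 1) = False := fun m => eq_false (by omega)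
  have P06 : ∀ m : ℕ, (m = m + 2 + 1 + 1) = False := fun m => eq_false (by omega)
  have P10 : ∀ m : ℕ, (m + 1 = m) = False := fun m => eq_false (by omega)
  have P12 : ∀ m : ℕ, (m + 1 = m + 2) = False := fun m => eq_false (by omega)
  have P13 : ∀ m : ℕ, (m + 1 = m + 1 + 1) = False := fun m => eq_false (by omega)
  have P14 : ∀ m : ℕ, (m + 1 = m + 2 + 1) = False := fun m => eq_false (by omega)
  have P15 : ∀ m : ℕ, (m + 1 = m + 1 + 1 + 1) = False := fun m => eq_false (by omega)
  have P16 : ∀ m : ℕ, (m + 1 = m + 2 + 1 + 1) = False := fun m => eq_false (by omega)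
  have P20 : ∀ m : ℕ, (m + 2 = m) = False := fun m => eq_false (by omega)
  have P21 : ∀ m : ℕ, (m + 2 = m + 1) = False := fun m => eq_false (by omega)
  have P23 : ∀ m : ℕ, (m + 2 = m + 1 + 1) = True := fun m => eq_true (by omega)
  have P24 : ∀ m : ℕ, (m + 2 = m + 2 + 1) = False := fun m => eq_false (by omega)
  have P25 : ∀ m : ℕ, (m + 2 = m + 1 + 1 + 1) = False := fun m => eq_false (by omega)
  have P26 : ∀ m : ℕ, (m + 2 = m + 2 + 1 + 1) = False := fun m => eq_false (by omega)
  have P30 : ∀ m : ℕ, (m + 1 + 1 = m) = False := fun m => eq_false (by omega)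
  have P31 : ∀ m : ℕ, (m + 1 + 1 = m + 1) = False := fun m => eq_false (by omega)
  have P32 : ∀ m : ℕ, (m + 1 + 1 = m + 2) = True := fun m => eq_true (by omega)
  have P34 : ∀ m : ℕ, (m + 1 + 1 = m + 2 + 1) = False := fun m => eq_false (by omega)
  have P35 : ∀ m : ℕ, (m + 1 + 1 = m + 1 + 1 + 1) = False := fun m => eq_false (by omega)
  have P36 : ∀ m : ℕ, (m + 1 + 1 = m + 2 + 1 + 1) = False := fun m => eq_false (by omega)
  have P40 : ∀ m : ℕ, (m + 2 + 1 = m) = False := fun m => eq_false (by omega)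
  have P41 : ∀ m : ℕ, (m + 2 + 1 = m + 1) = False := fun m => eq_false (by omega)
  have P42 : ∀ m : ℕ, (m + 2 + 1 = m + 2) = False := fun m => eq_false (by omega)
  have P43 : ∀ m : ℕ, (m + 2 + 1 = m + 1 + 1) = False := fun m => eq_false (by omega)
  have P45 : ∀ m : ℕ, (m + 2 + 1 = m + 1 + 1 + 1) = True := fun m => eq_true (by omega)
  have P46 : ∀ m : ℕ, (m + 2 + 1 = m + 2 + 1 + 1) = False := fun m => eq_false (by omega)
  have P50 : ∀ m : ℕ, (m + 1 + 1 + 1 = m) = False := fun m => eq_false (by omega)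
  have P51 : ∀ m : ℕ, (m + 1 + 1 + 1 = m + 1) = False := fun m => eq_false (by omega)
  have P52 : ∀ m : ℕ, (m + 1 + 1 + 1 = m + 2) = False := fun m => eq_false (by omega)
  have P53 : ∀ m : ℕ, (m + 1 + 1 + 1 = m + 1 + 1) = False := fun m => eq_false (by omega)
  have P54 : ∀ m : ℕ, (m + 1 + 1 + 1 = m + 2 + 1) = True := fun m => eq_true (by omega)
  have P56 : ∀ m : ℕ, (m + 1 + 1 + 1 = m + 2 + 1 + 1) = False := fun m => eq_false (by omega)
  have P60 : ∀ m : ℕ, (m + 2 + 1 + 1 = m) = False := fun m => eq_false (by omega)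
  have P61 : ∀ m : ℕ, (m + 2 + 1 + 1 = m + 1) = False := fun m => eq_false (by omega)
  have P62 : ∀ m : ℕ, (m + 2 + 1 + 1 = m + 2) = False := fun m => eq_false (by omega)
  have P63 : ∀ m : ℕ, (m + 2 + 1 + 1 = m + 1 + 1) = False := fun m => eq_false (by omega)
  have P64 : ∀ m : ℕ, (m + 2 + 1 + 1 = m + 2 + 1) = False := fun m => eq_false (by omega)
  have P65 : ∀ m : ℕ, (m + 2 + 1 + 1 = m + 1 + 1 + 1) = False := fun m => eq_false (by omega)
  rcases (show j = i ∨ j = i + 1 ∨ j = i + 2 ∨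
      (¬(i = j) ∧ ¬(i + 1 = j) ∧ ¬(i + 1 + 1 = j)) by omega) with
    hj | hj | hj | ⟨hj1, hj2, hj3⟩ <;>
  rcases (show k = i ∨ k = i + 1 ∨ k = i + 2 ∨
      (¬(i = k) ∧ ¬(i + 1 = k) ∧ ¬(i + 1 + 1 = k)) by omega) with
    hk | hk | hk | ⟨hk1, hk2, hk3⟩ <;>
  first
  | omega
  | (simp only [lkE3, lkE2, lkStep, lkDelta, P01, P02, P03, P04, P05, P06, P10, P12, P13, P14, P15, P16, P20, P21, P23, P24, P25, P26, P30, P31, P32, P34, P35, P36, P40, P41, P42, P43, P45, P46, P50, P51, P52, P53, P54, P56, P60, P61, P62, P63, P64, P65, *,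
      eq_self_iff_true, if_true, if_false,
      true_and, and_true, false_and, and_false, not_true, not_false_iff] <;>
    first
    | (split_ifs <;> first | ring | omega)
    | ring
    | omega)
set_option maxHeartbeats 4000000 in
lemma lk_comm_entry_aux {R : Type*} [CommRing R] (q t : R) (i j a b c d : ℕ) (hij : i + 2 ≤ j) :
    lkE2 q t i j a b c d = lkE2 q t j i a b c d := by
  have e2 : ∀ m : ℕ, m + 1 + 1 = m + 2 := fun m => rfl
  have d01 : ∀ m : ℕ, ¬(m = m + 1) := by omega
  have d02 : ∀ m : ℕ, ¬(m = m + 2) := by omega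
  have d10 : ∀ m : ℕ, ¬(m + 1 = m) := by omega
  have d20 : ∀ m : ℕ, ¬(m + 2 = m) := by omega
  have d12 : ∀ m : ℕ, ¬(m + 1 = m + 2) := by omega
  have d21 : ∀ m : ℕ, ¬(m + 2 = m + 1) := by omega
  have c1 : ¬(i = j) := by omega
  have c2 : ¬(i + 1 = j) := by omega
  have c3 : ¬(j = i) := by omega
  have c4 : ¬(j + 1 = i) := by omega
  have c5 : ¬(i = j + 1) := by omega
  have c6 : ¬(i + 1 = j + 1) := by omega
  have c7 : ¬(j = i + 1) := by omega
  have c8 : ¬(j + 1 = i + 1) := by omega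
  rcases (show c = i ∨ c = i + 1 ∨ c = j ∨ c = j + 1 ∨
      (¬(i = c) ∧ ¬(i + 1 = c) ∧ ¬(j = c) ∧ ¬(j + 1 = c)) by omega) with
    hc | hc | hc | hc | ⟨hc1, hc2, hc3, hc4⟩ <;>
  rcases (show d = i ∨ d = i + 1 ∨ d = j ∨ d = j + 1 ∨
      (¬(i = d) ∧ ¬(i + 1 = d) ∧ ¬(j = d) ∧ ¬(j + 1 = d)) by omega) with
    hd | hd | hd | hd | ⟨hd1, hd2, hd3, hd4⟩ <;>
  simp only [lkE2, lkStep, lkDelta, e2, d01, d02, d10, d20, d12, d21,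
      c1, c2, c3, c4, c5, c6, c7, c8, *, eq_self_iff_true, if_true, if_false,
      true_and, and_true, false_and, and_false, not_true, not_false_iff] <;>
  first
  | (split_ifs <;> first | ring | omega)
  | ring
  | omega

/-- The Lawrence-Krammer matrices over `ℤ[q^{±1},t^{±1}]` satisfy the braid relations.
Generators are 0-indexed: `σ_i` for `0 ≤ i ≤ n-2`. -/
theorem lk_braid_relations (n : ℕ) :
    (∀ i : ℕ, i + 3 ≤ n →
      lkMat qLK tLK n i * lkMat qLK tLK n (i + 1) * lkMat qLK tLK n i =
        lkMat qLK tLK n (i + 1) * lkMat qLK tLK n i * lkMat qLK tLK n (i + 1)) ∧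
    (∀ i j : ℕ, i + 2 ≤ j → j + 2 ≤ n →
      lkMat qLK tLK n i * lkMat qLK tLK n j = lkMat qLK tLK n j * lkMat qLK tLK n i) := by
  constructor
  · intro i hi
    apply Matrix.ext
    intro p p''
    obtain ⟨⟨⟨j, hj⟩, ⟨k, hk⟩⟩, hjk⟩ := p''
    have hjk' : j < k := hjk
    exact (lk_three_entry qLK tLK (by omega) (by omega) p hjk' hj hk).trans
      ((lk_braid_entry_aux qLK tLK i _ _ j k hjk').trans
        (lk_three_entry qLK tLK (by omega) (by omega) p hjk' hj hk).symm)
  · intro i j hij hjn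
    apply Matrix.ext
    intro p p''
    obtain ⟨⟨⟨c, hc⟩, ⟨d, hd⟩⟩, hcd⟩ := p''
    have hcd' : c < d := hcd
    exact (lk_two_entry qLK tLK (by omega) p hcd' hc hd).trans
      ((lk_comm_entry_aux qLK tLK i j _ _ c d hij).trans
        (lk_two_entry qLK tLK (by omega) p hcd' hc hd).symm)
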